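/- arXiv:1807.01021 — 2 statements merged into one kernel-verified Lean document; each statement's English description precedes it below -/
import Mathlib

section
/- Let G be a connected graph with Δ(G) ≥ k ≥ 3. Then L_k(G) ≥ diam(G) + k − 2. -/
open Finset

/-- `B` is a `k`-limited packing in `G`: every closed neighbourhood contains
at most `k` vertices of `B`. -/
def limPack {V : Type*} [Fintype V] [DecidableEq V] (G : SimpleGraph V)
    [DecidableRel G.Adj] (k : ℕ) (B : Finset V) : Prop :=
  ∀ v : V, (insert v (G.neighborFinset v) ∩ B).card ≤ k

/-- The `k`-limited packing number `L_k(G)`. -/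
noncomputable def limPackNum {V : Type*} [Fintype V] [DecidableEq V] (G : SimpleGraph V)
    [DecidableRel G.Adj] (k : ℕ) : ℕ :=
  sSup {n | ∃ B : Finset V, limPack G k B ∧ B.card = n}

section Aux

variable {V : Type*} {G : SimpleGraph V}

/-- Between any two vertices of a walk there is a walk of controlled length. -/
lemma exists_walk_getVert (p : G.Walk u v) :
    ∀ i j : ℕ, i ≤ j → ∃ q : G.Walk (p.getVert i) (p.getVert j), q.length ≤ j - i := by
  induction p with
  | nil =>
    intro i j _
    exact ⟨(SimpleGraph.Walk.nil).copy rfl rfl, by simp⟩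
  | @cons a b c h q ih =>
    intro i j hij
    match i, j with
    | 0, 0 => exact ⟨SimpleGraph.Walk.nil.copy rfl rfl, by simp⟩
    | 0, (j+1) =>
      obtain ⟨r, hr⟩ := ih 0 j (Nat.zero_le _)
      refine ⟨(SimpleGraph.Walk.cons h (r.copy q.getVert_zero rfl)).copy rfl rfl, ?_⟩
      exact Nat.succ_le_succ ((SimpleGraph.Walk.length_copy _ _ _).trans_le hr)
    | (i+1), (j+1) =>
      obtain ⟨r, hr⟩ := ih i j (by omega)
      exact ⟨r.copy rfl rfl, by simpa using hr⟩

lemma dist_getVert_le (p : G.Walk u v) {i j : ℕ} (hij : i ≤ j) :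
    G.dist (p.getVert i) (p.getVert j) ≤ j - i := by
  obtain ⟨q, hq⟩ := exists_walk_getVert p i j hij
  exact le_trans (SimpleGraph.dist_le q) hq

/-- On a geodesic, the distance between vertices is the index difference. -/
lemma dist_getVert_eq (hG : G.Connected) (p : G.Walk u v)
    (hp : p.length = G.dist u v) {i j : ℕ} (hij : i ≤ j) (hj : j ≤ p.length) :
    G.dist (p.getVert i) (p.getVert j) = j - i := by
  refine le_antisymm (dist_getVert_le p hij) ?_
  have h1 : G.dist u (p.getVert i) ≤ i := by
    have := dist_getVert_le p (Nat.zero_le i)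
    simpa [p.getVert_zero] using this
  have h2 : G.dist (p.getVert j) v ≤ p.length - j := by
    have := dist_getVert_le p hj
    simpa [p.getVert_length] using this
  have tri : G.dist u v ≤ G.dist u (p.getVert i) +
      (G.dist (p.getVert i) (p.getVert j) + G.dist (p.getVert j) v) :=
    le_trans (hG.dist_triangle (v := p.getVert i))
      (by exact Nat.add_le_add_left (hG.dist_triangle (v := p.getVert j)) _)
  omega

end Aux

section Aux2

variable {V : Type*} [Fintype V] [DecidableEq V] (G : SimpleGraph V) [DecidableRel G.Adj]

lemma limPack_mono {m k : ℕ} {B : Finset V} (h : limPack G m B) (hmk : m ≤ k) :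
    limPack G k B := fun v => le_trans (h v) hmk

/-- A limited packing can be extended while below the max degree. -/
lemma limPack_extend {k m : ℕ} (hΔ : k ≤ G.maxDegree) {B : Finset V}
    (hB : limPack G m B) (hm : m < k) :
    ∃ B' : Finset V, limPack G (m + 1) B' ∧ B'.card = B.card + 1 := by
  have hBne : B ≠ Finset.univ := by
    intro hEq
    have hdeg : ∀ v : V, G.degree v ≤ m - 1 := by
      intro v
      have := hB v
      rw [hEq, Finset.inter_univ] at this
      rw [Finset.card_insert_of_notMem (G.notMem_neighborFinset_self v),
        G.card_neighborFinset_eq_degree] at this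
      omega
    have := G.maxDegree_le_of_forall_degree_le _ hdeg
    omega
  obtain ⟨v, hv⟩ : ∃ v : V, v ∉ B := by
    by_contra hc
    push_neg at hc
    exact hBne (Finset.eq_univ_iff_forall.mpr hc)
  refine ⟨insert v B, ?_, Finset.card_insert_of_notMem hv⟩
  intro w
  have hsub : insert w (G.neighborFinset w) ∩ insert v B ⊆
      insert v (insert w (G.neighborFinset w) ∩ B) := by
    intro x hx
    simp only [Finset.mem_inter, Finset.mem_insert] at hx ⊢
    tauto
  calc (insert w (G.neighborFinset w) ∩ insert v B).card
      ≤ (insert v (insert w (G.neighborFinset w) ∩ B)).card := Finset.card_le_card hsub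
    _ ≤ (insert w (G.neighborFinset w) ∩ B).card + 1 := Finset.card_insert_le _ _
    _ ≤ m + 1 := by exact Nat.add_le_add_right (hB w) 1

lemma limPack_extend_iter {k : ℕ} (hΔ : k ≤ G.maxDegree) {B : Finset V}
    (hB : limPack G 3 B) : ∀ j : ℕ, 3 + j ≤ k →
    ∃ B' : Finset V, limPack G (3 + j) B' ∧ B'.card = B.card + j := by
  intro j
  induction j with
  | zero => intro _; exact ⟨B, hB, rfl⟩
  | succ n ih =>
    intro hn
    obtain ⟨B', hB', hcard⟩ := ih (by omega)
    obtain ⟨B'', hB'', hcard'⟩ := limPack_extend G hΔ hB' (show 3 + n < k by omega)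
    refine ⟨B'', ?_, ?_⟩
    · have h3 : 3 + (n + 1) = (3 + n) + 1 := by omega
      rw [h3]; exact hB''
    · omega

end Aux2

theorem stmt_6 {V : Type*} [Fintype V] [DecidableEq V] (G : SimpleGraph V)
    [DecidableRel G.Adj] (hG : G.Connected) (k : ℕ) (hk : 3 ≤ k)
    (hΔ : k ≤ G.maxDegree) :
    G.diam + k - 2 ≤ limPackNum G k := by
  have hne : Nonempty V := hG.nonempty
  obtain ⟨u, w, huw⟩ := SimpleGraph.exists_dist_eq_diam (G := G)
  obtain ⟨p, hp⟩ := (hG u w).exists_walk_length_eq_dist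
  have hLd : p.length = G.diam := by rw [hp, huw]
  -- geodesic vertex set
  set B : Finset V := (Finset.range (p.length + 1)).image p.getVert with hBdef
  have hinj : Set.InjOn p.getVert (Finset.range (p.length + 1)) := by
    intro i hi j hj hij
    simp only [Finset.coe_range, Set.mem_Iio] at hi hj
    by_contra hne'
    rcases Nat.lt_or_ge i j with h | h
    · have := dist_getVert_eq hG p hp (le_of_lt h) (by omega)
      rw [hij, SimpleGraph.dist_self] at this; omega
    · have hlt : j < i := lt_of_le_of_ne h (Ne.symm hne')
      have := dist_getVert_eq hG p hp (le_of_lt hlt) (by omega)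
      rw [← hij, SimpleGraph.dist_self] at this; omega
  have hBcard : B.card = p.length + 1 := by
    rw [hBdef, Finset.card_image_of_injOn hinj, Finset.card_range]
  -- B is a 3-limited packing
  have hB3 : limPack G 3 B := by
    intro v
    set S := insert v (G.neighborFinset v) ∩ B with hSdef
    have hdistv : ∀ a ∈ S, G.dist v a ≤ 1 := by
      intro a ha
      rw [hSdef, Finset.mem_inter, Finset.mem_insert] at ha
      rcases ha.1 with h | h
      · rw [h, SimpleGraph.dist_self]; exact Nat.zero_le 1
      · rw [SimpleGraph.mem_neighborFinset] at h
        exact le_of_eq (SimpleGraph.dist_eq_one_iff_adj.mpr h)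
    have hdist2 : ∀ a ∈ S, ∀ b ∈ S, G.dist a b ≤ 2 := by
      intro a ha b hb
      have := hG.dist_triangle (u := a) (v := v) (w := b)
      have h1 : G.dist a v ≤ 1 := by rw [SimpleGraph.dist_comm]; exact hdistv a ha
      have h2 := hdistv b hb
      omega
    set T : Finset ℕ := (Finset.range (p.length + 1)).filter (fun i => p.getVert i ∈ S) with hTdef
    have hST : S ⊆ T.image p.getVert := by
      intro a ha
      have haB : a ∈ B := (Finset.mem_inter.mp ha).2
      rw [hBdef, Finset.mem_image] at haB
      obtain ⟨i, hi, hia⟩ := haB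
      refine Finset.mem_image.mpr ⟨i, ?_, hia⟩
      rw [hTdef, Finset.mem_filter]
      exact ⟨hi, by rw [hia]; exact ha⟩
    have hcardST : S.card ≤ T.card :=
      le_trans (Finset.card_le_card hST) (Finset.card_image_le)
    have hTspread : ∀ i ∈ T, ∀ j ∈ T, i ≤ j → j - i ≤ 2 := by
      intro i hi j hj hij
      rw [hTdef, Finset.mem_filter, Finset.mem_range] at hi hj
      have := dist_getVert_eq hG p hp hij (by omega)
      have h2 := hdist2 _ hi.2 _ hj.2
      omega
    rcases T.eq_empty_or_nonempty with hT | hT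
    · rw [hT] at hcardST; simpa using le_trans hcardST (by norm_num)
    · have hTsub : T ⊆ Finset.Icc (T.min' hT) (T.min' hT + 2) := by
        intro i hi
        rw [Finset.mem_Icc]
        refine ⟨T.min'_le i hi, ?_⟩
        have := hTspread _ (T.min'_mem hT) _ hi (T.min'_le i hi)
        omega
      calc S.card ≤ T.card := hcardST
        _ ≤ (Finset.Icc (T.min' hT) (T.min' hT + 2)).card := Finset.card_le_card hTsub
        _ = 3 := by rw [Nat.card_Icc]; omega
  -- extend to a k-limited packing
  obtain ⟨B', hB', hBcard'⟩ := limPack_extend_iter G hΔ hB3 (k - 3) (by omega)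
  have hBk : limPack G k B' := limPack_mono G hB' (by omega)
  have hmem : B'.card ∈ {n | ∃ B : Finset V, limPack G k B ∧ B.card = n} :=
    ⟨B', hBk, rfl⟩
  have hbdd : BddAbove {n | ∃ B : Finset V, limPack G k B ∧ B.card = n} := by
    refine ⟨Fintype.card V, fun n hn => ?_⟩
    obtain ⟨C, _, hC⟩ := hn
    rw [← hC]
    exact Finset.card_le_univ C
  have := le_csSup hbdd hmem
  rw [limPackNum]
  omega
end

section
/- For any graph G with at least one edge, L_1(G) + 1 ≤ L_2(G) ≤ (2(Δ(G)² + 1)/(δ(G) + 1)) · L_1(G). -/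
open Finset

lemma limPack_bdd {V : Type*} [Fintype V] [DecidableEq V] (G : SimpleGraph V)
    [DecidableRel G.Adj] (k : ℕ) :
    BddAbove {n | ∃ B : Finset V, limPack G k B ∧ B.card = n} := by
  refine ⟨Fintype.card V, ?_⟩
  rintro n ⟨B, -, rfl⟩
  exact B.card_le_univ

lemma limPack_le {V : Type*} [Fintype V] [DecidableEq V] (G : SimpleGraph V)
    [DecidableRel G.Adj] (k : ℕ) {B : Finset V} (h : limPack G k B) :
    B.card ≤ limPackNum G k :=
  le_csSup (limPack_bdd G k) ⟨B, h, rfl⟩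

lemma exists_limPack_max {V : Type*} [Fintype V] [DecidableEq V] (G : SimpleGraph V)
    [DecidableRel G.Adj] (k : ℕ) :
    ∃ B : Finset V, limPack G k B ∧ B.card = limPackNum G k := by
  have h := Nat.sSup_mem (s := {n | ∃ B : Finset V, limPack G k B ∧ B.card = n})
    ⟨0, ∅, fun v => by simp, rfl⟩ (limPack_bdd G k)
  obtain ⟨B, hB, hc⟩ := h
  exact ⟨B, hB, hc⟩

lemma card_eq_sum_ite {V : Type*} [Fintype V] [DecidableEq V] (s : Finset V) :
    s.card = ∑ v : V, if v ∈ s then 1 else 0 := by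
  rw [← Finset.card_filter, Finset.filter_mem_eq_inter, Finset.univ_inter]

theorem stmt_19 {V : Type*} [Fintype V] [DecidableEq V] (G : SimpleGraph V)
    [DecidableRel G.Adj] (he : ∃ u v : V, G.Adj u v) :
    limPackNum G 1 + 1 ≤ limPackNum G 2 ∧
    (G.minDegree + 1) * limPackNum G 2 ≤
      2 * (G.maxDegree ^ 2 + 1) * limPackNum G 1 := by
  obtain ⟨u, v, huv⟩ := he
  constructor
  · obtain ⟨B, hB, hc⟩ := exists_limPack_max G 1
    have hne : ∃ x, x ∉ B := by
      by_contra h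
      push_neg at h
      have h1 := hB u
      have hsub : ({u, v} : Finset V) ⊆ insert u (G.neighborFinset u) ∩ B := by
        intro x hx
        simp only [mem_insert, mem_singleton] at hx
        rcases hx with rfl | rfl
        · simp [h x]
        · simp [h x, huv]
      have h2 : 2 ≤ (insert u (G.neighborFinset u) ∩ B).card := by
        calc 2 = ({u, v} : Finset V).card := by
              rw [card_insert_of_notMem (by simp [G.ne_of_adj huv]), card_singleton]
          _ ≤ _ := card_le_card hsub
      omega
    obtain ⟨x, hx⟩ := hne
    have hB' : limPack G 2 (insert x B) := by
      intro w
      have h1 := hB w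
      have hsub : insert w (G.neighborFinset w) ∩ insert x B ⊆
          insert x (insert w (G.neighborFinset w) ∩ B) := by
        intro y hy
        simp only [mem_inter, mem_insert] at hy ⊢
        tauto
      calc (insert w (G.neighborFinset w) ∩ insert x B).card
          ≤ (insert x (insert w (G.neighborFinset w) ∩ B)).card := card_le_card hsub
        _ ≤ (insert w (G.neighborFinset w) ∩ B).card + 1 := card_insert_le _ _
        _ ≤ 2 := by omega
    have := limPack_le G 2 hB'
    rw [card_insert_of_notMem hx, hc] at this
    omega
  · obtain ⟨B2, hB2, hc2⟩ := exists_limPack_max G 2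
    obtain ⟨B1, hB1, hc1⟩ := exists_limPack_max G 1
    set D := G.maxDegree with hD
    -- Step A : (δ + 1) * |B2| ≤ 2 * |V|
    have stepA : (G.minDegree + 1) * B2.card ≤ 2 * Fintype.card V := by
      have key : ∑ b ∈ B2, (insert b (G.neighborFinset b)).card
          = ∑ w : V, (insert w (G.neighborFinset w) ∩ B2).card := by
        calc ∑ b ∈ B2, (insert b (G.neighborFinset b)).card
            = ∑ b ∈ B2, ∑ w : V, if w ∈ insert b (G.neighborFinset b) then 1 else 0 := by
              refine Finset.sum_congr rfl fun b _ => _root_.card_eq_sum_ite _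
          _ = ∑ w : V, ∑ b ∈ B2, if w ∈ insert b (G.neighborFinset b) then 1 else 0 :=
              Finset.sum_comm
          _ = ∑ w : V, ∑ b ∈ B2, if b ∈ insert w (G.neighborFinset w) then 1 else 0 := by
              refine Finset.sum_congr rfl fun w _ => Finset.sum_congr rfl fun b _ => ?_
              congr 1
              simp only [mem_insert, SimpleGraph.mem_neighborFinset, eq_iff_iff]
              constructor <;> rintro (rfl | h)
              exacts [Or.inl rfl, Or.inr h.symm, Or.inl rfl, Or.inr h.symm]
          _ = ∑ w : V, (insert w (G.neighborFinset w) ∩ B2).card := by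
              refine Finset.sum_congr rfl fun w _ => ?_
              rw [← Finset.card_filter, Finset.filter_mem_eq_inter, Finset.inter_comm]
      have lhs : (G.minDegree + 1) * B2.card
          ≤ ∑ b ∈ B2, (insert b (G.neighborFinset b)).card := by
        have : ∀ b ∈ B2, G.minDegree + 1 ≤ (insert b (G.neighborFinset b)).card := by
          intro b _
          rw [card_insert_of_notMem (by simp), G.card_neighborFinset_eq_degree]
          have := G.minDegree_le_degree b
          omega
        calc (G.minDegree + 1) * B2.card = ∑ _b ∈ B2, (G.minDegree + 1) := by
              rw [Finset.sum_const, smul_eq_mul, mul_comm]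
          _ ≤ _ := Finset.sum_le_sum this
      have rhs : ∑ w : V, (insert w (G.neighborFinset w) ∩ B2).card
          ≤ 2 * Fintype.card V := by
        calc ∑ w : V, (insert w (G.neighborFinset w) ∩ B2).card
            ≤ ∑ _w : V, 2 := Finset.sum_le_sum fun w _ => hB2 w
          _ = 2 * Fintype.card V := by rw [Finset.sum_const, smul_eq_mul, mul_comm]; rfl
      omega
    -- Step B : |V| ≤ (Δ² + 1) * |B1|
    have stepB : Fintype.card V ≤ (D ^ 2 + 1) * B1.card := by
      set ball : V → Finset V := fun b =>
        insert b (G.neighborFinset b) ∪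
          (G.neighborFinset b).biUnion (fun u => (G.neighborFinset u).erase b) with hball
      have hballcard : ∀ b : V, (ball b).card ≤ D ^ 2 + 1 := by
        intro b
        have h1 : (insert b (G.neighborFinset b)).card ≤ D + 1 := by
          rw [card_insert_of_notMem (by simp), G.card_neighborFinset_eq_degree]
          have := G.degree_le_maxDegree b
          omega
        have h2 : ((G.neighborFinset b).biUnion
            (fun u => (G.neighborFinset u).erase b)).card ≤ D * (D - 1) := by
          calc ((G.neighborFinset b).biUnion (fun u => (G.neighborFinset u).erase b)).card
              ≤ ∑ u ∈ G.neighborFinset b, ((G.neighborFinset u).erase b).card :=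
                card_biUnion_le
            _ ≤ ∑ _u ∈ G.neighborFinset b, (D - 1) := by
                refine Finset.sum_le_sum fun u hu => ?_
                have hbu : b ∈ G.neighborFinset u := by
                  rw [SimpleGraph.mem_neighborFinset] at hu ⊢
                  exact hu.symm
                have := Finset.card_erase_add_one hbu
                have hdeg : (G.neighborFinset u).card ≤ D := by
                  rw [G.card_neighborFinset_eq_degree]; exact G.degree_le_maxDegree u
                omega
            _ = (G.neighborFinset b).card * (D - 1) := by
                rw [Finset.sum_const, smul_eq_mul]
            _ ≤ D * (D - 1) := by
                have : (G.neighborFinset b).card ≤ D := by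
                  rw [G.card_neighborFinset_eq_degree]; exact G.degree_le_maxDegree b
                exact Nat.mul_le_mul_right _ this
        have h3 : (ball b).card ≤ (D + 1) + D * (D - 1) := by
          calc (ball b).card ≤ _ + _ := card_union_le _ _
            _ ≤ (D + 1) + D * (D - 1) := Nat.add_le_add h1 h2
        have h4 : (D + 1) + D * (D - 1) ≤ D ^ 2 + 1 := by
          cases D with
          | zero => simp
          | succ d => simp only [Nat.succ_sub_one, pow_two]; nlinarith
        omega
      have hcover : (univ : Finset V) ⊆ B1.biUnion ball := by
        intro w _
        rw [mem_biUnion]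
        by_cases hwB : w ∈ B1
        · exact ⟨w, hwB, by simp [hball]⟩
        · have hnot : ¬ limPack G 1 (insert w B1) := by
            intro h
            have := limPack_le G 1 h
            rw [card_insert_of_notMem hwB, hc1] at this
            omega
          rw [limPack] at hnot
          push_neg at hnot
          obtain ⟨z, hz⟩ := hnot
          have hz1 := hB1 z
          have hsplit : insert z (G.neighborFinset z) ∩ insert w B1 ⊆
              insert w (insert z (G.neighborFinset z) ∩ B1) := by
            intro y hy
            simp only [mem_inter, mem_insert] at hy ⊢
            tauto
          have hwz : w ∈ insert z (G.neighborFinset z) := by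
            by_contra hwz
            have heq : insert z (G.neighborFinset z) ∩ insert w B1 =
                insert z (G.neighborFinset z) ∩ B1 := by
              ext y
              simp only [mem_inter, mem_insert]
              constructor
              · rintro ⟨hy1, rfl | hy2⟩
                · exact absurd (mem_insert.mpr hy1) hwz
                · exact ⟨hy1, hy2⟩
              · rintro ⟨hy1, hy2⟩; exact ⟨hy1, Or.inr hy2⟩
            rw [heq] at hz
            omega
          have hbex : ∃ b ∈ B1, b ∈ insert z (G.neighborFinset z) := by
            by_contra hb
            push_neg at hb
            have hsub2 : insert z (G.neighborFinset z) ∩ insert w B1 ⊆ {w} := by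
              intro y hy
              simp only [mem_inter, mem_insert, mem_singleton] at hy ⊢
              rcases hy with ⟨hy1, rfl | hy2⟩
              · rfl
              · exact absurd (mem_insert.mpr hy1) (hb y hy2)
            have := card_le_card hsub2
            simp only [card_singleton] at this
            omega
          obtain ⟨b, hbB, hbz⟩ := hbex
          refine ⟨b, hbB, ?_⟩
          by_cases hwb : w = b
          · simp [hball, hwb]
          simp only [mem_insert, SimpleGraph.mem_neighborFinset] at hwz hbz
          simp only [hball, mem_union, mem_insert, SimpleGraph.mem_neighborFinset,
            mem_biUnion, mem_erase]
          rcases hwz with rfl | hwz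
          · rcases hbz with rfl | h
            · exact absurd rfl hwb
            · exact Or.inl (Or.inr h.symm)
          · rcases hbz with rfl | hbz
            · exact Or.inl (Or.inr hwz)
            · exact Or.inr ⟨z, hbz.symm, hwb, hwz⟩
      calc Fintype.card V = (univ : Finset V).card := rfl
        _ ≤ (B1.biUnion ball).card := card_le_card hcover
        _ ≤ ∑ b ∈ B1, (ball b).card := card_biUnion_le
        _ ≤ ∑ _b ∈ B1, (D ^ 2 + 1) := Finset.sum_le_sum fun b _ => hballcard b
        _ = (D ^ 2 + 1) * B1.card := by rw [Finset.sum_const, smul_eq_mul, mul_comm]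
    calc (G.minDegree + 1) * limPackNum G 2 = (G.minDegree + 1) * B2.card := by rw [hc2]
      _ ≤ 2 * Fintype.card V := stepA
      _ ≤ 2 * ((D ^ 2 + 1) * B1.card) := Nat.mul_le_mul_left _ stepB
      _ = 2 * (D ^ 2 + 1) * limPackNum G 1 := by rw [hc1, mul_assoc]
end
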